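/- Let p : Fin 4 → ℝ² be a quadrilateral in general position. Then exactly one of the following three configurations holds: (i) the open diagonals intersect (openSegment ℝ (p 0) (p 2) ∩ openSegment ℝ (p 1) (p 3) ≠ ∅); (ii) some point p_i lies in the interior of the convex hull of the other three points; (iii) a pair of opposite open edges intersects (openSegment ℝ (p 0) (p 1) ∩ openSegment ℝ (p 2) (p 3) ≠ ∅ or openSegment ℝ (p 1) (p 2) ∩ openSegment ℝ (p 3) (p 0) ≠ ∅). -/

import Mathlib

/-- The cross value of three points in the plane: the z-coordinate of the
cross product `(b - a) × (c - b)`. -/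
noncomputable def cross (a b c : ℝ × ℝ) : ℝ :=
  (b.1 - a.1) * (c.2 - b.2) - (b.2 - a.2) * (c.1 - b.1)

lemma cross_cyc (a b c : ℝ × ℝ) : cross b c a = cross a b c := by unfold cross; ring
lemma cross_swap (a b c : ℝ × ℝ) : cross a c b = -cross a b c := by unfold cross; ring
lemma cross_self_left (a b : ℝ × ℝ) : cross a b a = 0 := by unfold cross; ring
lemma cross_self_right (a b : ℝ × ℝ) : cross a b b = 0 := by unfold cross; ring

lemma cross_affine (a b c d : ℝ × ℝ) (s t : ℝ) (h : s + t = 1) :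
    cross a b (s • c + t • d) = s * cross a b c + t * cross a b d := by
  have ht : t = 1 - s := by linarith
  subst ht
  simp only [cross, Prod.smul_fst, Prod.smul_snd, Prod.fst_add, Prod.snd_add, smul_eq_mul]
  ring

/-- uniqueness of intersection of two non-parallel lines -/
lemma line_unique (a b c d u v : ℝ × ℝ) (h1 : cross a b u = 0) (h2 : cross a b v = 0)
    (h3 : cross c d u = 0) (h4 : cross c d v = 0)
    (hne : cross a b d - cross a b c ≠ 0) : u = v := by
  have e5 : (b.1 - a.1) * (u.2 - v.2) - (b.2 - a.2) * (u.1 - v.1) = 0 := by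
    have := h1; have := h2; unfold cross at *; linarith
  have e6 : (d.1 - c.1) * (u.2 - v.2) - (d.2 - c.2) * (u.1 - v.1) = 0 := by
    have := h3; have := h4; unfold cross at *; linarith
  have hK : cross a b d - cross a b c =
      (b.1 - a.1) * (d.2 - c.2) - (b.2 - a.2) * (d.1 - c.1) := by unfold cross; ring
  rw [hK] at hne
  have w1 : (u.1 - v.1) = 0 := by
    have key : ((b.1 - a.1) * (d.2 - c.2) - (b.2 - a.2) * (d.1 - c.1)) * (u.1 - v.1) = 0 := by
      linear_combination (d.1 - c.1) * e5 - (b.1 - a.1) * e6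
    rcases mul_eq_zero.mp key with h | h
    · exact absurd h hne
    · exact h
  have w2 : (u.2 - v.2) = 0 := by
    have key : ((b.1 - a.1) * (d.2 - c.2) - (b.2 - a.2) * (d.1 - c.1)) * (u.2 - v.2) = 0 := by
      linear_combination (d.2 - c.2) * e5 - (b.2 - a.2) * e6
    rcases mul_eq_zero.mp key with h | h
    · exact absurd h hne
    · exact h
  have : u.1 = v.1 := by linarith
  have : u.2 = v.2 := by linarith
  exact Prod.ext ‹u.1 = v.1› ‹u.2 = v.2›

lemma mem_openSegment_combo {a b : ℝ × ℝ} {s t : ℝ} (hs : 0 < s) (ht : 0 < t)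
    (hst : s + t = 1) : s • a + t • b ∈ openSegment ℝ a b :=
  ⟨s, t, hs, ht, hst, rfl⟩

lemma seg_inter_iff (a b c d : ℝ × ℝ)
    (h1 : cross a b c ≠ 0) (h2 : cross a b d ≠ 0)
    (h3 : cross c d a ≠ 0) (h4 : cross c d b ≠ 0) :
    (openSegment ℝ a b ∩ openSegment ℝ c d).Nonempty ↔
      cross a b c * cross a b d < 0 ∧ cross c d a * cross c d b < 0 := by
  constructor
  · rintro ⟨x, ⟨s, t, hs, ht, hst, hx⟩, ⟨u, v, hu, hv, huv, hx'⟩⟩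
    have hab : cross a b x = 0 := by
      rw [← hx, cross_affine a b a b s t hst, cross_self_left, cross_self_right]; ring
    have hcd : cross c d x = 0 := by
      rw [← hx', cross_affine c d c d u v huv, cross_self_left, cross_self_right]; ring
    have habx : u * cross a b c + v * cross a b d = 0 := by
      rw [← cross_affine a b c d u v huv, hx']; exact hab
    have hcdx : s * cross c d a + t * cross c d b = 0 := by
      rw [← cross_affine c d a b s t hst, hx]; exact hcd
    constructor
    · rcases h1.lt_or_gt with h | h
      · have : 0 < cross a b d := by nlinarith
        nlinarith
      · have : cross a b d < 0 := by nlinarith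
        nlinarith
    · rcases h3.lt_or_gt with h | h
      · have : 0 < cross c d b := by nlinarith
        nlinarith
      · have : cross c d b < 0 := by nlinarith
        nlinarith
  · rintro ⟨hcd, hab⟩
    set C := cross a b c with hC
    set D := cross a b d with hD
    set A := cross c d a with hA
    set B := cross c d b with hB
    have hCD : C - D ≠ 0 := by intro h; rw [show C = D by linarith] at hcd; nlinarith
    have hAB : A - B ≠ 0 := by intro h; rw [show A = B by linarith] at hab; nlinarith
    set t := C / (C - D) with hT
    set s := A / (A - B) with hS
    have ht0 : 0 < t ∧ t < 1 := by
      rcases h1.lt_or_gt with h | h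
      · have hd : 0 < D := by nlinarith
        constructor
        · apply div_pos_of_neg_of_neg h; linarith
        · rw [div_lt_one_iff]; exact Or.inr (Or.inr ⟨by linarith, by linarith⟩)
      · have hd : D < 0 := by nlinarith
        constructor
        · apply div_pos h; linarith
        · rw [div_lt_one (by linarith)]; linarith
    have hs0 : 0 < s ∧ s < 1 := by
      rcases h3.lt_or_gt with h | h
      · have hd : 0 < B := by nlinarith
        constructor
        · apply div_pos_of_neg_of_neg h; linarith
        · rw [div_lt_one_iff]; exact Or.inr (Or.inr ⟨by linarith, by linarith⟩)
      · have hd : B < 0 := by nlinarith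
        constructor
        · apply div_pos h; linarith
        · rw [div_lt_one (by linarith)]; linarith
    set x : ℝ × ℝ := (1 - t) • c + t • d with hx
    set y : ℝ × ℝ := (1 - s) • a + s • b with hy
    have habx : cross a b x = 0 := by
      rw [hx, cross_affine a b c d (1 - t) t (by ring), ← hC, ← hD]
      field_simp [hT]
      have h' : t * (C - D) = C := by rw [hT]; exact div_mul_cancel₀ C hCD
      linear_combination -h'
    have hcdy : cross c d y = 0 := by
      rw [hy, cross_affine c d a b (1 - s) s (by ring), ← hA, ← hB]
      field_simp [hS]
      have h' : s * (A - B) = A := by rw [hS]; exact div_mul_cancel₀ A hAB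
      linear_combination -h'
    have hcdx : cross c d x = 0 := by
      rw [hx, cross_affine c d c d (1 - t) t (by ring), cross_self_left, cross_self_right]; ring
    have haby : cross a b y = 0 := by
      rw [hy, cross_affine a b a b (1 - s) s (by ring), cross_self_left, cross_self_right]; ring
    have hxy : x = y := line_unique a b c d x y habx haby hcdx hcdy (by
      rw [← hD, ← hC]; intro h; apply hCD; linarith)
    refine ⟨x, ?_, ?_⟩
    · rw [hxy, hy]; exact mem_openSegment_combo (by linarith [hs0.2]) hs0.1 (by ring)
    · rw [hx]; exact mem_openSegment_combo (by linarith [ht0.2]) ht0.1 (by ring)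

lemma cross_det (a b c : ℝ × ℝ) :
    cross a b c = (b.1 - a.1) * (c.2 - a.2) - (b.2 - a.2) * (c.1 - a.1) := by
  unfold cross; ring

lemma affineIndependent_of_cross {a b c : ℝ × ℝ} (h : cross a b c ≠ 0) :
    AffineIndependent ℝ ![a, b, c] := by
  rw [affineIndependent_iff_not_collinear]
  intro hcol
  have hmem : a ∈ (Set.range ![a, b, c]) := ⟨0, rfl⟩
  obtain ⟨v, hv⟩ := (collinear_iff_of_mem hmem).mp hcol
  obtain ⟨rb, hb⟩ := hv b (by exact ⟨1, rfl⟩)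
  obtain ⟨rc, hc⟩ := hv c (by exact ⟨2, rfl⟩)
  apply h
  rw [cross_det, hb, hc]
  simp only [vadd_eq_add, Prod.fst_add, Prod.snd_add, Prod.smul_fst, Prod.smul_snd, smul_eq_mul]
  ring

lemma cross_combo (a b c : ℝ × ℝ) (α β γ : ℝ) (h : α + β + γ = 1) :
    cross b c (α • a + β • b + γ • c) = α * cross a b c := by
  have hγ : γ = 1 - α - β := by linarith
  subst hγ
  simp only [cross, Prod.smul_fst, Prod.smul_snd, Prod.fst_add, Prod.snd_add, smul_eq_mul]
  ring

lemma mem_interior_triangle (a b c x : ℝ × ℝ) (hT : cross a b c ≠ 0) :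
    x ∈ interior (convexHull ℝ ({a, b, c} : Set (ℝ × ℝ))) ↔
      (0 < cross b c x ∧ 0 < cross c a x ∧ 0 < cross a b x) ∨
      (cross b c x < 0 ∧ cross c a x < 0 ∧ cross a b x < 0) := by
  have hind : AffineIndependent ℝ ![a, b, c] := affineIndependent_of_cross hT
  have htot : affineSpan ℝ (Set.range ![a, b, c]) = ⊤ := by
    rw [hind.affineSpan_eq_top_iff_card_eq_finrank_add_one]
    simp
  let bas : AffineBasis (Fin 3) ℝ (ℝ × ℝ) := ⟨![a, b, c], hind, htot⟩
  have hrange : ({a, b, c} : Set (ℝ × ℝ)) = Set.range ⇑bas := by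
    show _ = Set.range ![a, b, c]
    ext y
    simp [Matrix.range_cons, Matrix.range_empty, Set.mem_insert_iff]
    tauto
  rw [hrange, bas.interior_convexHull]
  set α := bas.coord 0 x with hα
  set β := bas.coord 1 x with hβ
  set γ := bas.coord 2 x with hγ
  have hsum : α + β + γ = 1 := by
    have := bas.sum_coord_apply_eq_one x
    rwa [Fin.sum_univ_three] at this
  have hcomb : α • a + β • b + γ • c = x := by
    have := bas.linear_combination_coord_eq_self x
    rwa [Fin.sum_univ_three] at this
  have e1 : cross b c x = α * cross a b c := by
    rw [← hcomb]; exact cross_combo a b c α β γ hsum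
  have e2 : cross c a x = β * cross a b c := by
    rw [← hcomb, show α • a + β • b + γ • c = β • b + γ • c + α • a by ring]
    rw [cross_combo b c a β γ α (by linarith), cross_cyc]
  have e3 : cross a b x = γ * cross a b c := by
    rw [← hcomb, show α • a + β • b + γ • c = γ • c + α • a + β • b by ring]
    rw [cross_combo c a b γ α β (by linarith), ← cross_cyc, cross_cyc]
  have hforall : (∀ i, 0 < bas.coord i x) ↔ 0 < α ∧ 0 < β ∧ 0 < γ := by
    constructor
    · intro h; exact ⟨h 0, h 1, h 2⟩
    · rintro ⟨h1, h2, h3⟩ i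
      fin_cases i
      · exact h1
      · exact h2
      · exact h3
  rw [Set.mem_setOf_eq, hforall, e1, e2, e3]
  rcases hT.lt_or_gt with h | h
  · constructor
    · rintro ⟨h1, h2, h3⟩; right; refine ⟨?_, ?_, ?_⟩ <;> nlinarith
    · rintro (⟨h1, h2, h3⟩ | ⟨h1, h2, h3⟩) <;> refine ⟨?_, ?_, ?_⟩ <;> nlinarith
  · constructor
    · rintro ⟨h1, h2, h3⟩; left; refine ⟨?_, ?_, ?_⟩ <;> nlinarith
    · rintro (⟨h1, h2, h3⟩ | ⟨h1, h2, h3⟩) <;> refine ⟨?_, ?_, ?_⟩ <;> nlinarith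

/-- A quadrilateral `p : Fin 4 → ℝ²` is in general position if no three of its
four points are collinear. -/
def GeneralPosition (p : Fin 4 → ℝ × ℝ) : Prop :=
  ∀ i j k : Fin 4, i ≠ j → i ≠ k → j ≠ k → cross (p i) (p j) (p k) ≠ 0

/-- The Q-value of a quadrilateral: `|∑ i, sgn (cross (p (i-1)) (p i) (p (i+1)))|`. -/
noncomputable def Qvalue (p : Fin 4 → ℝ × ℝ) : ℝ :=
  |∑ i : Fin 4, Real.sign (cross (p (i - 1)) (p i) (p (i + 1)))|

lemma image_ne_set (p : Fin 4 → ℝ × ℝ) (i j k l : Fin 4)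
    (h : {m : Fin 4 | m ≠ i} = {j, k, l}) :
    p '' {m | m ≠ i} = {p j, p k, p l} := by
  rw [h, Set.image_insert_eq, Set.image_insert_eq, Set.image_singleton]

set_option maxHeartbeats 2000000 in
theorem quadrilateral_trichotomy (p : Fin 4 → ℝ × ℝ)
    (hp : GeneralPosition p) :
    (openSegment ℝ (p 0) (p 2) ∩ openSegment ℝ (p 1) (p 3) ≠ ∅ ∧
      ¬ (∃ i : Fin 4, p i ∈ interior (convexHull ℝ (p '' {j | j ≠ i}))) ∧
      ¬ (openSegment ℝ (p 0) (p 1) ∩ openSegment ℝ (p 2) (p 3) ≠ ∅ ∨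
         openSegment ℝ (p 1) (p 2) ∩ openSegment ℝ (p 3) (p 0) ≠ ∅)) ∨
    (¬ (openSegment ℝ (p 0) (p 2) ∩ openSegment ℝ (p 1) (p 3) ≠ ∅) ∧
      (∃ i : Fin 4, p i ∈ interior (convexHull ℝ (p '' {j | j ≠ i}))) ∧
      ¬ (openSegment ℝ (p 0) (p 1) ∩ openSegment ℝ (p 2) (p 3) ≠ ∅ ∨
         openSegment ℝ (p 1) (p 2) ∩ openSegment ℝ (p 3) (p 0) ≠ ∅)) ∨
    (¬ (openSegment ℝ (p 0) (p 2) ∩ openSegment ℝ (p 1) (p 3) ≠ ∅) ∧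
      ¬ (∃ i : Fin 4, p i ∈ interior (convexHull ℝ (p '' {j | j ≠ i}))) ∧
      (openSegment ℝ (p 0) (p 1) ∩ openSegment ℝ (p 2) (p 3) ≠ ∅ ∨
       openSegment ℝ (p 1) (p 2) ∩ openSegment ℝ (p 3) (p 0) ≠ ∅)) := by
  set A := cross (p 0) (p 1) (p 2) with hA_def
  set B := cross (p 0) (p 1) (p 3) with hB_def
  set C := cross (p 0) (p 2) (p 3) with hC_def
  set D := cross (p 1) (p 2) (p 3) with hD_def
  have e021 : cross (p 0) (p 2) (p 1) = -A := by rw [hA_def]; unfold cross; ring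
  have e130 : cross (p 1) (p 3) (p 0) = B := by rw [hB_def]; unfold cross; ring
  have e132 : cross (p 1) (p 3) (p 2) = -D := by rw [hD_def]; unfold cross; ring
  have e230 : cross (p 2) (p 3) (p 0) = C := by rw [hC_def]; unfold cross; ring
  have e231 : cross (p 2) (p 3) (p 1) = D := by rw [hD_def]; unfold cross; ring
  have e120 : cross (p 1) (p 2) (p 0) = A := by rw [hA_def]; unfold cross; ring
  have e301 : cross (p 3) (p 0) (p 1) = B := by rw [hB_def]; unfold cross; ring
  have e302 : cross (p 3) (p 0) (p 2) = C := by rw [hC_def]; unfold cross; ring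
  have e310 : cross (p 3) (p 1) (p 0) = -B := by rw [hB_def]; unfold cross; ring
  have e203 : cross (p 2) (p 0) (p 3) = -C := by rw [hC_def]; unfold cross; ring
  have hrel : A - B + C - D = 0 := by
    rw [hA_def, hB_def, hC_def, hD_def]; unfold cross; ring
  have hA0 : A ≠ 0 := hp 0 1 2 (by decide) (by decide) (by decide)
  have hB0 : B ≠ 0 := hp 0 1 3 (by decide) (by decide) (by decide)
  have hC0 : C ≠ 0 := hp 0 2 3 (by decide) (by decide) (by decide)
  have hD0 : D ≠ 0 := hp 1 2 3 (by decide) (by decide) (by decide)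
  -- the diagonal characterization
  have hX : (openSegment ℝ (p 0) (p 2) ∩ openSegment ℝ (p 1) (p 3) ≠ ∅) ↔
      (-A * C < 0 ∧ B * -D < 0) := by
    rw [← Set.nonempty_iff_ne_empty,
      seg_inter_iff _ _ _ _ (hp 0 2 1 (by decide) (by decide) (by decide))
        (hp 0 2 3 (by decide) (by decide) (by decide))
        (hp 1 3 0 (by decide) (by decide) (by decide))
        (hp 1 3 2 (by decide) (by decide) (by decide)), e021, e130, e132]
  have hZ1 : (openSegment ℝ (p 0) (p 1) ∩ openSegment ℝ (p 2) (p 3) ≠ ∅) ↔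
      (A * B < 0 ∧ C * D < 0) := by
    rw [← Set.nonempty_iff_ne_empty,
      seg_inter_iff _ _ _ _ (hp 0 1 2 (by decide) (by decide) (by decide))
        (hp 0 1 3 (by decide) (by decide) (by decide))
        (hp 2 3 0 (by decide) (by decide) (by decide))
        (hp 2 3 1 (by decide) (by decide) (by decide)), e230, e231]
  have hZ2 : (openSegment ℝ (p 1) (p 2) ∩ openSegment ℝ (p 3) (p 0) ≠ ∅) ↔
      (D * A < 0 ∧ B * C < 0) := by
    rw [← Set.nonempty_iff_ne_empty,
      seg_inter_iff _ _ _ _ (hp 1 2 3 (by decide) (by decide) (by decide))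
        (hp 1 2 0 (by decide) (by decide) (by decide))
        (hp 3 0 1 (by decide) (by decide) (by decide))
        (hp 3 0 2 (by decide) (by decide) (by decide)), e120, e301, e302]
  -- the triangle characterizations
  have hs0 : p '' {j | j ≠ 0} = {p 1, p 2, p 3} := by
    apply image_ne_set
    ext j
    simp only [Set.mem_setOf_eq, Set.mem_insert_iff, Set.mem_singleton_iff]
    fin_cases j <;> decide
  have hs1 : p '' {j | j ≠ 1} = {p 0, p 2, p 3} := by
    apply image_ne_set
    ext j
    simp only [Set.mem_setOf_eq, Set.mem_insert_iff, Set.mem_singleton_iff]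
    fin_cases j <;> decide
  have hs2 : p '' {j | j ≠ 2} = {p 0, p 1, p 3} := by
    apply image_ne_set
    ext j
    simp only [Set.mem_setOf_eq, Set.mem_insert_iff, Set.mem_singleton_iff]
    fin_cases j <;> decide
  have hs3 : p '' {j | j ≠ 3} = {p 0, p 1, p 2} := by
    apply image_ne_set
    ext j
    simp only [Set.mem_setOf_eq, Set.mem_insert_iff, Set.mem_singleton_iff]
    fin_cases j <;> decide
  have h0mem : (p 0 ∈ interior (convexHull ℝ (p '' {j | j ≠ 0}))) ↔
      ((0 < C ∧ 0 < -B ∧ 0 < A) ∨ (C < 0 ∧ -B < 0 ∧ A < 0)) := by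
    rw [hs0, mem_interior_triangle _ _ _ _ (hp 1 2 3 (by decide) (by decide) (by decide)),
      e230, e310, e120]
  have h1mem : (p 1 ∈ interior (convexHull ℝ (p '' {j | j ≠ 1}))) ↔
      ((0 < D ∧ 0 < B ∧ 0 < -A) ∨ (D < 0 ∧ B < 0 ∧ -A < 0)) := by
    rw [hs1, mem_interior_triangle _ _ _ _ (hp 0 2 3 (by decide) (by decide) (by decide)),
      e231, e301, e021]
  have h2mem : (p 2 ∈ interior (convexHull ℝ (p '' {j | j ≠ 2}))) ↔
      ((0 < -D ∧ 0 < C ∧ 0 < A) ∨ (-D < 0 ∧ C < 0 ∧ A < 0)) := by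
    rw [hs2, mem_interior_triangle _ _ _ _ (hp 0 1 3 (by decide) (by decide) (by decide)),
      e132, e302]
  have h3mem : (p 3 ∈ interior (convexHull ℝ (p '' {j | j ≠ 3}))) ↔
      ((0 < D ∧ 0 < -C ∧ 0 < B) ∨ (D < 0 ∧ -C < 0 ∧ B < 0)) := by
    rw [hs3, mem_interior_triangle _ _ _ _ (hp 0 1 2 (by decide) (by decide) (by decide)),
      e203]
  have hY : (∃ i : Fin 4, p i ∈ interior (convexHull ℝ (p '' {j | j ≠ i}))) ↔
      (((0 < C ∧ 0 < -B ∧ 0 < A) ∨ (C < 0 ∧ -B < 0 ∧ A < 0)) ∨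
       ((0 < D ∧ 0 < B ∧ 0 < -A) ∨ (D < 0 ∧ B < 0 ∧ -A < 0)) ∨
       ((0 < -D ∧ 0 < C ∧ 0 < A) ∨ (-D < 0 ∧ C < 0 ∧ A < 0)) ∨
       ((0 < D ∧ 0 < -C ∧ 0 < B) ∨ (D < 0 ∧ -C < 0 ∧ B < 0))) := by
    constructor
    · rintro ⟨i, hi⟩
      fin_cases i
      · exact Or.inl (h0mem.mp hi)
      · exact Or.inr (Or.inl (h1mem.mp hi))
      · exact Or.inr (Or.inr (Or.inl (h2mem.mp hi)))
      · exact Or.inr (Or.inr (Or.inr (h3mem.mp hi)))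
    · rintro (h | h | h | h)
      exacts [⟨0, h0mem.mpr h⟩, ⟨1, h1mem.mpr h⟩, ⟨2, h2mem.mpr h⟩, ⟨3, h3mem.mpr h⟩]
  rw [hX, hY, hZ1, hZ2]
  clear hX hY hZ1 hZ2 h0mem h1mem h2mem h3mem hs0 hs1 hs2 hs3
  clear e021 e130 e132 e230 e231 e120 e301 e302 e310 e203 hp
  clear_value A B C D
  clear hA_def hB_def hC_def hD_def
  rcases hA0.lt_or_gt with hA | hA <;> rcases hB0.lt_or_gt with hB | hB <;>
    rcases hC0.lt_or_gt with hC | hC <;> rcases hD0.lt_or_gt with hD | hD <;>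
  first
  | (exfalso; linarith)
  | exact Or.inl ⟨⟨by nlinarith, by nlinarith⟩,
      by rintro ((⟨h1,h2,h3⟩|⟨h1,h2,h3⟩)|(⟨h1,h2,h3⟩|⟨h1,h2,h3⟩)|(⟨h1,h2,h3⟩|⟨h1,h2,h3⟩)|(⟨h1,h2,h3⟩|⟨h1,h2,h3⟩)) <;> linarith,
      by rintro (⟨h1,h2⟩|⟨h1,h2⟩) <;> nlinarith⟩
  | exact Or.inr (Or.inl ⟨by rintro ⟨h1,h2⟩; nlinarith,
      by first
        | exact Or.inl (Or.inl ⟨by linarith, by linarith, by linarith⟩)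
        | exact Or.inl (Or.inr ⟨by linarith, by linarith, by linarith⟩)
        | exact Or.inr (Or.inl (Or.inl ⟨by linarith, by linarith, by linarith⟩))
        | exact Or.inr (Or.inl (Or.inr ⟨by linarith, by linarith, by linarith⟩))
        | exact Or.inr (Or.inr (Or.inl (Or.inl ⟨by linarith, by linarith, by linarith⟩)))
        | exact Or.inr (Or.inr (Or.inl (Or.inr ⟨by linarith, by linarith, by linarith⟩)))
        | exact Or.inr (Or.inr (Or.inr (Or.inl ⟨by linarith, by linarith, by linarith⟩)))
        | exact Or.inr (Or.inr (Or.inr (Or.inr ⟨by linarith, by linarith, by linarith⟩))),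
      by rintro (⟨h1,h2⟩|⟨h1,h2⟩) <;> nlinarith⟩)
  | exact Or.inr (Or.inr ⟨by rintro ⟨h1,h2⟩; nlinarith,
      by rintro ((⟨h1,h2,h3⟩|⟨h1,h2,h3⟩)|(⟨h1,h2,h3⟩|⟨h1,h2,h3⟩)|(⟨h1,h2,h3⟩|⟨h1,h2,h3⟩)|(⟨h1,h2,h3⟩|⟨h1,h2,h3⟩)) <;> linarith,
      by first
        | exact Or.inl ⟨by nlinarith, by nlinarith⟩
        | exact Or.inr ⟨by nlinarith, by nlinarith⟩⟩)
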